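/- If f is a sin-concave function defined on an interval [-a,a] (a < π) containing 0 and f attains its maximum at 0, then g(t) = f(|t|) is also sin-concave on [-a,a]. -/

import Mathlib

open Real

set_option maxHeartbeats 1600000

/-- `f` is `sin`-concave on `I`. -/
def SinConcaveOn (I : Set ℝ) (f : ℝ → ℝ) : Prop :=
  ∀ x₁ ∈ I, ∀ x₂ ∈ I, ∀ α ∈ Set.Ioo (0 : ℝ) 1,
    f (α * x₁ + (1 - α) * x₂) ≥
      (Real.sin (α * |x₂ - x₁|) / Real.sin |x₂ - x₁|) * f x₁ +
      (Real.sin ((1 - α) * |x₂ - x₁|) / Real.sin |x₂ - x₁|) * f x₂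

namespace Stmt11Aux

variable {a : ℝ} {f : ℝ → ℝ}

lemma f_nonneg (hconc : SinConcaveOn (Set.Icc (-a) a) f) {x : ℝ}
    (hx : x ∈ Set.Icc (-a) a) : 0 ≤ f x := by
  have h := hconc x hx x hx (1/2) ⟨by norm_num, by norm_num⟩
  have e1 : (1/2 : ℝ) * x + (1 - 1/2) * x = x := by ring
  rw [e1, sub_self, abs_zero, mul_zero, mul_zero] at h
  simpa using h

/-- chord inequality from the pair (0, v). -/
lemma chord (hconc : SinConcaveOn (Set.Icc (-a) a) f) (ha : 0 < a) (haπ : a < π)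
    {u v : ℝ} (hu : 0 ≤ u) (huv : u ≤ v) (hva : v ≤ a) :
    sin (v - u) * f 0 + sin u * f v ≤ f u * sin v := by
  rcases eq_or_lt_of_le hu with hu0 | hu0
  · rw [← hu0]
    simp [mul_comm]
  rcases eq_or_lt_of_le huv with huv0 | huv0
  · rw [huv0, sub_self]
    simp [mul_comm]
  have hv0 : 0 < v := lt_trans hu0 huv0
  have hvπ : v < π := lt_of_le_of_lt hva haπ
  have hα : (v - u)/v ∈ Set.Ioo (0:ℝ) 1 :=
    ⟨div_pos (by linarith) hv0, (div_lt_one hv0).mpr (by linarith)⟩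
  have h := hconc 0 ⟨by linarith, by linarith⟩ v ⟨by linarith, by linarith⟩ _ hα
  have e2 : |v - 0| = v := by rw [sub_zero, abs_of_pos hv0]
  rw [e2] at h
  have e3 : (v-u)/v * v = v - u := div_mul_cancel₀ _ hv0.ne'
  have e4 : (1 - (v-u)/v) * v = u := by field_simp; ring
  rw [e3, e4] at h
  have e5 : (v-u)/v * 0 + u = u := by ring
  rw [e5] at h
  have hsv : 0 < sin v := Real.sin_pos_of_pos_of_lt_pi hv0 hvπ
  rw [ge_iff_le, div_mul_eq_mul_div, div_mul_eq_mul_div, ← add_div,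
    div_le_iff₀ hsv] at h
  exact h

/-- key bound: `f x ≤ cos x * f 0` on `[0, a]`. -/
lemma fCosBound (hconc : SinConcaveOn (Set.Icc (-a) a) f)
    (hmax : ∀ x ∈ Set.Icc (-a) a, f x ≤ f 0) (ha : 0 < a) (haπ : a < π)
    {x : ℝ} (hx0 : 0 ≤ x) (hxa : x ≤ a) : f x ≤ cos x * f 0 := by
  rcases eq_or_lt_of_le hx0 with h0 | h0
  · rw [← h0]; simp
  by_contra hcon
  push_neg at hcon
  have hxmem : x ∈ Set.Icc (-a) a := ⟨by linarith, hxa⟩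
  have hfx_le : f x ≤ f 0 := hmax x hxmem
  have hfx0 : 0 ≤ f x := f_nonneg hconc hxmem
  have hf0 : 0 ≤ f 0 := f_nonneg hconc ⟨by linarith, by linarith⟩
  have hf0pos : 0 < f 0 := by
    rcases eq_or_lt_of_le hf0 with h | h
    · exfalso
      have : f x = 0 := le_antisymm (by linarith) hfx0
      rw [this, ← h] at hcon
      simp at hcon
    · exact h
  have hxπ : x < π := lt_of_le_of_lt hxa haπ
  set ε := f x - cos x * f 0 with hε
  have hεpos : 0 < ε := by simp only [hε]; linarith
  set u := min x (ε / f 0) / 2 with hu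
  have hmin0 : 0 < min x (ε / f 0) := lt_min h0 (div_pos hεpos hf0pos)
  have hu0 : 0 < u := by simp only [hu]; linarith
  have hux2 : u ≤ x / 2 := by
    have : min x (ε/f 0) ≤ x := min_le_left _ _
    simp only [hu]; linarith
  have hux : u < x := by linarith
  have huf : u * f 0 ≤ ε/2 := by
    have h1 : min x (ε/f 0) ≤ ε/f 0 := min_le_right _ _
    have h2 : u ≤ ε/f 0/2 := by simp only [hu]; linarith
    have h3 : u * f 0 ≤ (ε/f 0/2) * f 0 := mul_le_mul_of_nonneg_right h2 hf0
    have h4 : (ε/f 0/2) * f 0 = ε/2 := by field_simp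
    linarith
  have hch := chord hconc ha haπ hu0.le hux.le hxa
  have hfu : f u ≤ f 0 := hmax u ⟨by linarith, by linarith⟩
  have hsx : 0 < sin x := Real.sin_pos_of_pos_of_lt_pi h0 hxπ
  have h2 : sin u = 2 * sin (u/2) * cos (u/2) := by
    have : u = 2 * (u/2) := by ring
    rw [this, Real.sin_two_mul]
    ring_nf
  have h3 : 1 - cos u = 2 * sin (u/2)^2 := by
    have hcu : cos u = 2 * cos (u/2)^2 - 1 := by
      have h := Real.cos_two_mul (u/2)
      rw [show (2:ℝ)*(u/2) = u by ring] at h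
      exact h
    have hsc := Real.sin_sq_add_cos_sq (u/2)
    linarith
  have hs2 : 0 < sin (u/2) := Real.sin_pos_of_pos_of_lt_pi (by linarith) (by linarith)
  have hc2 : (1/2 : ℝ) ≤ cos (u/2) := by
    have hu2 : u/2 ≤ π/3 := by
      have h5 : u/2 ≤ x/4 := by linarith
      have h6 : x < π := hxπ
      nlinarith [pi_pos]
    calc (1/2:ℝ) = cos (π/3) := by rw [Real.cos_pi_div_three]
      _ ≤ cos (u/2) := Real.cos_le_cos_of_nonneg_of_le_pi (by linarith) (by linarith [pi_pos]) hu2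
  have hsin_le : sin (u/2) ≤ u/2 := Real.sin_le (by linarith)
  have h4 : sin x * (1 - cos u) * f 0 < sin u * ε := by
    have s1 : sin x * (1 - cos u) * f 0 ≤ (1 - cos u) * f 0 := by
      have hcu : 0 ≤ 1 - cos u := by linarith [Real.cos_le_one u]
      nlinarith [mul_nonneg (sub_nonneg.mpr (Real.sin_le_one x)) (mul_nonneg hcu hf0)]
    have s2 : (1 - cos u) * f 0 ≤ 2 * sin (u/2) * (u/2) * f 0 := by
      rw [h3]
      nlinarith [mul_nonneg (sub_nonneg.mpr hsin_le) (mul_nonneg hs2.le hf0)]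
    have s3 : 2 * sin (u/2) * (u/2) * f 0 = sin (u/2) * (u * f 0) := by ring
    have s4 : sin (u/2) * (u * f 0) ≤ sin (u/2) * (ε/2) :=
      mul_le_mul_of_nonneg_left huf hs2.le
    have s5 : sin (u/2) * (ε/2) < (2 * sin (u/2) * cos (u/2)) * ε := by
      nlinarith [mul_nonneg (by linarith : (0:ℝ) ≤ cos (u/2) - 1/2) (mul_nonneg hs2.le hεpos.le), mul_pos hs2 hεpos]
    rw [h2]
    linarith
  have hfx : f x = cos x * f 0 + ε := by simp only [hε]; ring
  have key : sin x * f 0 < sin (x-u) * f 0 + sin u * f x := by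
    rw [hfx, Real.sin_sub]
    nlinarith [h4]
  have hlast : f u * sin x ≤ f 0 * sin x := mul_le_mul_of_nonneg_right hfu hsx.le
  nlinarith [hch, key, hlast]

lemma diamond_aux (hconc : SinConcaveOn (Set.Icc (-a) a) f)
    (hmax : ∀ x ∈ Set.Icc (-a) a, f x ≤ f 0) (ha : 0 < a) (haπ : a < π)
    {β γ : ℝ} (hβ0 : 0 ≤ β) (hγa : γ ≤ a) (hβγ : β ≤ γ) :
    sin γ * f β + sin β * f γ ≤ sin (β + γ) * f 0 := by
  have hγ0 : 0 ≤ γ := le_trans hβ0 hβγ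
  have hβa : β ≤ a := le_trans hβγ hγa
  have hch := chord hconc ha haπ hβ0 hβγ hγa
  have hcb := fCosBound hconc hmax ha haπ hβ0 hβa
  have hsγ : 0 ≤ sin γ := Real.sin_nonneg_of_nonneg_of_le_pi hγ0 (by linarith)
  have h1 : sin γ * f β ≤ sin γ * (cos β * f 0) := mul_le_mul_of_nonneg_left hcb hsγ
  have hid : sin (β + γ) = 2 * (sin γ * cos β) - sin (γ - β) := by
    rw [Real.sin_add, Real.sin_sub]; ring
  have hidf : sin (β + γ) * f 0 = 2 * (sin γ * cos β) * f 0 - sin (γ - β) * f 0 := by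
    linear_combination hid * f 0
  nlinarith [hch, h1, hidf]

lemma diamond (hconc : SinConcaveOn (Set.Icc (-a) a) f)
    (hmax : ∀ x ∈ Set.Icc (-a) a, f x ≤ f 0) (ha : 0 < a) (haπ : a < π)
    {β γ : ℝ} (hβ0 : 0 ≤ β) (hβa : β ≤ a) (hγ0 : 0 ≤ γ) (hγa : γ ≤ a) :
    sin γ * f β + sin β * f γ ≤ sin (β + γ) * f 0 := by
  rcases le_total β γ with h | h
  · exact diamond_aux hconc hmax ha haπ hβ0 hγa h
  · have hh := diamond_aux hconc hmax ha haπ hγ0 hβa h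
    rw [add_comm γ β] at hh
    linarith

/-- the mixed case with nonnegative combination point. -/
lemma mixed (hconc : SinConcaveOn (Set.Icc (-a) a) f)
    (hmax : ∀ x ∈ Set.Icc (-a) a, f x ≤ f 0) (ha : 0 < a) (haπ : a < π)
    {β γ α : ℝ} (hβ0 : 0 < β) (hβa : β ≤ a) (hγ0 : 0 < γ) (hγa : γ ≤ a)
    (hα0 : 0 < α) (hα1 : α < 1) (hdπ : β + γ < π)
    (p : ℝ) (hpdef : p = (1 - α) * γ - α * β) (hp0 : 0 ≤ p) :
    sin (γ - p) * f β + sin (β + p) * f γ ≤ f p * sin (β + γ) := by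
  have hpγ : p < γ := by rw [hpdef]; nlinarith
  have hch := chord hconc ha haπ hp0 hpγ.le hγa
  have hdia := diamond hconc hmax ha haπ hβ0.le hβa hγ0.le hγa
  have hγπ : γ < π := lt_of_le_of_lt hγa haπ
  have hsγ : 0 < sin γ := Real.sin_pos_of_pos_of_lt_pi hγ0 hγπ
  have hsγp : 0 ≤ sin (γ - p) :=
    Real.sin_nonneg_of_nonneg_of_le_pi (by linarith) (by linarith)
  have hsd : 0 < sin (β + γ) := Real.sin_pos_of_pos_of_lt_pi (by linarith) hdπ
  have hid : sin γ * sin (β + p) = sin (γ - p) * sin β + sin p * sin (β + γ) := by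
    rw [Real.sin_add, Real.sin_sub, Real.sin_add]; ring
  have step1 : sin (γ - p) * (sin γ * f β + sin β * f γ)
      ≤ sin (γ - p) * (sin (β + γ) * f 0) := mul_le_mul_of_nonneg_left hdia hsγp
  have step2 : sin (β+γ) * (sin (γ - p) * f 0 + sin p * f γ)
      ≤ sin (β+γ) * (f p * sin γ) := mul_le_mul_of_nonneg_left hch hsd.le
  have hidf : sin γ * sin (β + p) * f γ
      = sin (γ - p) * sin β * f γ + sin p * sin (β + γ) * f γ := by
    linear_combination hid * f γ
  have main : sin γ * (sin (γ - p) * f β + sin (β + p) * f γ)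
      ≤ sin γ * (f p * sin (β + γ)) := by nlinarith [step1, step2, hidf]
  exact (mul_le_mul_iff_right₀ hsγ).mp main

/-- the degenerate (distance > π) case auxiliary inequality. -/
lemma degen (hconc : SinConcaveOn (Set.Icc (-a) a) f) (ha : 0 < a) (haπ : a < π)
    {u₁ u₂ e : ℝ} (hu₁ : 0 < u₁) (h12 : u₁ ≤ u₂) (hu₂a : u₂ ≤ a)
    (he0 : 0 ≤ e) (heu : e ≤ u₁) :
    sin e * f u₂ ≤ f u₁ * sin (e + (u₂ - u₁)) := by
  have hf0 : 0 ≤ f 0 := f_nonneg hconc ⟨by linarith, by linarith⟩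
  have hfu₂ : 0 ≤ f u₂ := f_nonneg hconc ⟨by linarith, hu₂a⟩
  have hch := chord hconc ha haπ hu₁.le h12 hu₂a
  have hsD : 0 ≤ sin (u₂ - u₁) :=
    Real.sin_nonneg_of_nonneg_of_le_pi (by linarith) (by linarith)
  have hsu₂ : 0 < sin u₂ :=
    Real.sin_pos_of_pos_of_lt_pi (by linarith) (by linarith)
  have hsc : 0 ≤ sin (e + (u₂ - u₁)) :=
    Real.sin_nonneg_of_nonneg_of_le_pi (by linarith) (by linarith)
  have hse : 0 ≤ sin (u₁ - e) :=
    Real.sin_nonneg_of_nonneg_of_le_pi (by linarith) (by linarith)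
  have hid : sin u₁ * sin (e + (u₂ - u₁))
      = sin e * sin u₂ + sin (u₂ - u₁) * sin (u₁ - e) := by
    have key : ∀ A B C : ℝ, sin A * sin (C + B) = sin C * sin (A + B) + sin B * sin (A - C) := by
      intro A B C
      rw [Real.sin_add, Real.sin_add, Real.sin_sub]; ring
    have hid0 := key u₁ (u₂ - u₁) e
    rw [show u₁ + (u₂ - u₁) = u₂ from by ring] at hid0
    exact hid0
  have t1 : (sin (u₂-u₁) * f 0 + sin u₁ * f u₂) * sin (e + (u₂ - u₁))
      ≤ (f u₁ * sin u₂) * sin (e + (u₂ - u₁)) := mul_le_mul_of_nonneg_right hch hsc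
  have t2 : 0 ≤ sin (u₂-u₁) * f 0 * sin (e + (u₂ - u₁)) :=
    mul_nonneg (mul_nonneg hsD hf0) hsc
  have t3 : 0 ≤ sin (u₂-u₁) * sin (u₁-e) * f u₂ := mul_nonneg (mul_nonneg hsD hse) hfu₂
  have hidf : sin u₁ * sin (e + (u₂ - u₁)) * f u₂
      = sin e * sin u₂ * f u₂ + sin (u₂-u₁) * sin (u₁-e) * f u₂ := by
    linear_combination hid * f u₂
  have key : (sin e * f u₂) * sin u₂ ≤ (f u₁ * sin (e + (u₂ - u₁))) * sin u₂ := by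
    nlinarith [t1, t2, t3, hidf]
  exact (mul_le_mul_iff_left₀ hsu₂).mp key

lemma main_aux (hconc : SinConcaveOn (Set.Icc (-a) a) f)
    (hmax : ∀ x ∈ Set.Icc (-a) a, f x ≤ f 0) (ha : 0 < a) (haπ : a < π)
    {x₁ x₂ α : ℝ} (hx₁ : x₁ ∈ Set.Icc (-a) a) (hx₂ : x₂ ∈ Set.Icc (-a) a)
    (hα0 : 0 < α) (hα1 : α < 1) (hle : x₁ ≤ x₂) :
    sin (α * |x₂ - x₁|) / sin |x₂ - x₁| * f |x₁| +
      sin ((1 - α) * |x₂ - x₁|) / sin |x₂ - x₁| * f |x₂|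
      ≤ f |α * x₁ + (1 - α) * x₂| := by
  obtain ⟨hx₁l, hx₁r⟩ := hx₁
  obtain ⟨hx₂l, hx₂r⟩ := hx₂
  have habs : |x₂ - x₁| = x₂ - x₁ := abs_of_nonneg (by linarith)
  have hp_low : x₁ ≤ α * x₁ + (1 - α) * x₂ := by nlinarith
  have hp_high : α * x₁ + (1 - α) * x₂ ≤ x₂ := by nlinarith
  rcases le_or_gt 0 x₁ with h1 | h1
  · -- both nonneg
    rw [abs_of_nonneg (by linarith : 0 ≤ α * x₁ + (1 - α) * x₂),
      abs_of_nonneg h1, abs_of_nonneg (le_trans h1 hle)]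
    exact hconc x₁ ⟨hx₁l, hx₁r⟩ x₂ ⟨hx₂l, hx₂r⟩ α ⟨hα0, hα1⟩
  rcases le_or_gt x₂ 0 with h2 | h2
  · -- both nonpos
    have h := hconc (-x₁) ⟨by linarith, by linarith⟩ (-x₂) ⟨by linarith, by linarith⟩
      α ⟨hα0, hα1⟩
    have e1 : -x₂ - -x₁ = -(x₂ - x₁) := by ring
    rw [e1, abs_neg] at h
    have e2 : α * -x₁ + (1 - α) * -x₂ = -(α * x₁ + (1 - α) * x₂) := by ring
    rw [e2] at h
    rw [abs_of_nonpos (by linarith : α * x₁ + (1 - α) * x₂ ≤ 0),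
      abs_of_nonpos (le_trans hle h2), abs_of_nonpos h2]
    exact h
  · -- mixed: x₁ < 0 < x₂
    have hβ0 : 0 < -x₁ := by linarith
    have hβa : -x₁ ≤ a := by linarith
    have hpmem : |α * x₁ + (1 - α) * x₂| ∈ Set.Icc (-a) a := by
      constructor
      · linarith [abs_nonneg (α * x₁ + (1 - α) * x₂)]
      · rw [abs_le]
        constructor <;> linarith
    rw [habs, abs_of_neg h1, abs_of_pos h2]
    rcases lt_trichotomy (x₂ - x₁) π with hπ | hπ | hπ
    · -- d < π
      have hsd : 0 < sin (x₂ - x₁) := Real.sin_pos_of_pos_of_lt_pi (by linarith) hπ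
      rw [div_mul_eq_mul_div, div_mul_eq_mul_div, ← add_div, div_le_iff₀ hsd]
      rcases le_or_gt 0 (α * x₁ + (1 - α) * x₂) with hp | hp
      · rw [abs_of_nonneg hp]
        have h := mixed hconc hmax ha haπ hβ0 hβa h2 hx₂r hα0 hα1
          (by linarith : -x₁ + x₂ < π) (α * x₁ + (1 - α) * x₂) (by ring) hp
        rw [show x₂ - (α * x₁ + (1 - α) * x₂) = α * (x₂ - x₁) from by ring,
          show -x₁ + (α * x₁ + (1 - α) * x₂) = (1 - α) * (x₂ - x₁) from by ring,
          show -x₁ + x₂ = x₂ - x₁ from by ring] at h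
        exact h
      · rw [abs_of_neg hp]
        have h := mixed hconc hmax ha haπ h2 hx₂r hβ0 hβa
          (by linarith : (0:ℝ) < 1 - α) (by linarith : 1 - α < 1)
          (by linarith : x₂ + -x₁ < π) (-(α * x₁ + (1 - α) * x₂))
          (by ring) (by linarith)
        rw [show -x₁ - -(α * x₁ + (1 - α) * x₂) = (1 - α) * (x₂ - x₁) from by ring,
          show x₂ + -(α * x₁ + (1 - α) * x₂) = α * (x₂ - x₁) from by ring,
          show x₂ + -x₁ = x₂ - x₁ from by ring] at h
        linarith
    · -- d = π
      rw [hπ, Real.sin_pi, div_zero, div_zero, zero_mul, zero_mul, add_zero]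
      exact f_nonneg hconc hpmem
    · -- d > π
      have hd2π : x₂ - x₁ < 2*π := by linarith
      have hsc : 0 < sin (x₂ - x₁ - π) :=
        Real.sin_pos_of_pos_of_lt_pi (by linarith) (by linarith)
      have hsind : sin (x₂ - x₁) = -sin (x₂ - x₁ - π) := by
        have h := Real.sin_sub (x₂ - x₁) π
        rw [Real.sin_pi, Real.cos_pi] at h
        linarith
      have hsd_neg : sin (x₂ - x₁) < 0 := by rw [hsind]; linarith
      have hfβ : 0 ≤ f (-x₁) := f_nonneg hconc ⟨by linarith, by linarith⟩
      have hfγ : 0 ≤ f x₂ := f_nonneg hconc ⟨by linarith, by linarith⟩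
      rcases le_or_gt (α * (x₂ - x₁)) π with hA | hA
      · rcases le_or_gt ((1-α) * (x₂ - x₁)) π with hB | hB
        · -- both coefficients ≤ π : RHS ≤ 0
          have s1 : 0 ≤ sin (α * (x₂ - x₁)) :=
            Real.sin_nonneg_of_nonneg_of_le_pi (by nlinarith) hA
          have s2 : 0 ≤ sin ((1-α) * (x₂ - x₁)) :=
            Real.sin_nonneg_of_nonneg_of_le_pi (by nlinarith) hB
          have t1 : sin (α * (x₂ - x₁)) / sin (x₂ - x₁) * f (-x₁) ≤ 0 :=
            mul_nonpos_iff.mpr (Or.inr ⟨div_nonpos_iff.mpr (Or.inl ⟨s1, hsd_neg.le⟩), hfβ⟩)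
          have t2 : sin ((1-α) * (x₂ - x₁)) / sin (x₂ - x₁) * f x₂ ≤ 0 :=
            mul_nonpos_iff.mpr (Or.inr ⟨div_nonpos_iff.mpr (Or.inl ⟨s2, hsd_neg.le⟩), hfγ⟩)
          have := f_nonneg hconc hpmem
          linarith
        · -- (1-α) d > π : positive point
          have hαA : 0 < α * (x₂ - x₁) := by nlinarith
          have hp_pos : 0 < α * x₁ + (1 - α) * x₂ := by nlinarith
          rw [abs_of_pos hp_pos]
          have hdeg := degen hconc ha haπ
            (u₁ := α * x₁ + (1 - α) * x₂) (u₂ := x₂) (e := (1-α) * (x₂ - x₁) - π)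
            hp_pos hp_high hx₂r (by linarith) (by nlinarith)
          have earg : (1-α) * (x₂ - x₁) - π + (x₂ - (α * x₁ + (1 - α) * x₂))
              = x₂ - x₁ - π := by ring
          rw [earg] at hdeg
          have hsin1 : sin ((1-α) * (x₂ - x₁)) = -sin ((1-α) * (x₂ - x₁) - π) := by
            have h := Real.sin_sub ((1-α) * (x₂ - x₁)) π
            rw [Real.sin_pi, Real.cos_pi] at h
            linarith
          have t2 : sin ((1-α) * (x₂ - x₁)) / sin (x₂ - x₁) * f x₂
              ≤ f (α * x₁ + (1 - α) * x₂) := by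
            rw [hsin1, hsind, neg_div_neg_eq, div_mul_eq_mul_div, div_le_iff₀ hsc]
            exact hdeg
          have s1 : 0 ≤ sin (α * (x₂ - x₁)) :=
            Real.sin_nonneg_of_nonneg_of_le_pi (by linarith) hA
          have t1 : sin (α * (x₂ - x₁)) / sin (x₂ - x₁) * f (-x₁) ≤ 0 :=
            mul_nonpos_iff.mpr (Or.inr ⟨div_nonpos_iff.mpr (Or.inl ⟨s1, hsd_neg.le⟩), hfβ⟩)
          linarith
      · -- α d > π : negative point
        have hB : (1-α) * (x₂ - x₁) < π := by nlinarith
        have hB0 : 0 < (1-α) * (x₂ - x₁) := by nlinarith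
        have hp_neg : α * x₁ + (1 - α) * x₂ < 0 := by nlinarith
        rw [abs_of_neg hp_neg]
        have hdeg := degen hconc ha haπ
          (u₁ := -(α * x₁ + (1 - α) * x₂)) (u₂ := -x₁) (e := α * (x₂ - x₁) - π)
          (by linarith) (by nlinarith) hβa (by linarith) (by nlinarith)
        have earg : α * (x₂ - x₁) - π + (-x₁ - -(α * x₁ + (1 - α) * x₂))
            = x₂ - x₁ - π := by ring
        rw [earg] at hdeg
        have hsin1 : sin (α * (x₂ - x₁)) = -sin (α * (x₂ - x₁) - π) := by
          have h := Real.sin_sub (α * (x₂ - x₁)) π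
          rw [Real.sin_pi, Real.cos_pi] at h
          linarith
        have t1 : sin (α * (x₂ - x₁)) / sin (x₂ - x₁) * f (-x₁)
            ≤ f (-(α * x₁ + (1 - α) * x₂)) := by
          rw [hsin1, hsind, neg_div_neg_eq, div_mul_eq_mul_div, div_le_iff₀ hsc]
          exact hdeg
        have s2 : 0 ≤ sin ((1-α) * (x₂ - x₁)) :=
          Real.sin_nonneg_of_nonneg_of_le_pi (by linarith) hB.le
        have t2 : sin ((1-α) * (x₂ - x₁)) / sin (x₂ - x₁) * f x₂ ≤ 0 :=
          mul_nonpos_iff.mpr (Or.inr ⟨div_nonpos_iff.mpr (Or.inl ⟨s2, hsd_neg.le⟩), hfγ⟩)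
        linarith

end Stmt11Aux

/-- If `f` is `sin`-concave on `[-a,a]` (with `a < π`) and attains its maximum at `0`,
then `g(t) = f(|t|)` is also `sin`-concave on `[-a,a]`. -/
theorem stmt_11 (a : ℝ) (ha : 0 < a) (haπ : a < Real.pi)
    (f : ℝ → ℝ) (hconc : SinConcaveOn (Set.Icc (-a) a) f)
    (hmax : ∀ x ∈ Set.Icc (-a) a, f x ≤ f 0) :
    SinConcaveOn (Set.Icc (-a) a) (fun t => f |t|) := by
  intro x₁ hx₁ x₂ hx₂ α hα
  obtain ⟨hα0, hα1⟩ := hα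
  simp only [ge_iff_le]
  rcases le_total x₁ x₂ with hle | hle
  · exact Stmt11Aux.main_aux hconc hmax ha haπ hx₁ hx₂ hα0 hα1 hle
  · have h := Stmt11Aux.main_aux hconc hmax ha haπ hx₂ hx₁
      (by linarith : (0:ℝ) < 1 - α) (by linarith : 1 - α < 1) hle
    rw [abs_sub_comm x₁ x₂] at h
    have e1 : (1 : ℝ) - (1 - α) = α := by ring
    rw [e1] at h
    have e2 : (1 - α) * x₂ + α * x₁ = α * x₁ + (1 - α) * x₂ := by ring
    rw [e2] at h
    linarith
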